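/- Let v₁, …, v₄ ∈ ℝ³ be affinely independent with det B_K > 0, let K = F_K(K̂), and define the four face parametrizations φ₁^K(s,t) = F_K(s,t,0), φ₂^K(s,t) = F_K(s,0,t), φ₃^K(s,t) = F_K(0,s,t), φ₄^K(s,t) = F_K(s,t,1−s−t) on the reference triangle K̂₂. Then for every function ψ continuous on ∂K, ∫_{∂K} ψ dμH² = Σ_{ℓ=1}^{4} 2|e_ℓ^K| ∫_{K̂₂} ψ(φ_ℓ^K(s,t)) ds dt, where |e_ℓ^K| is the area (two-dimensional Hausdorff measure) of the ℓ-th face and the inner integrals are with respect to Lebesgue measure on ℝ². -/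

import Mathlib

open Matrix MeasureTheory Set
open scoped ENNReal NNReal

noncomputable section

/-- `B_K`: the 3×3 matrix whose columns are `v₂ − v₁`, `v₃ − v₁`, `v₄ − v₁`. -/
noncomputable def Bmat (v : Fin 4 → EuclideanSpace ℝ (Fin 3)) : Matrix (Fin 3) (Fin 3) ℝ :=
  Matrix.of fun i j => v j.succ i - v 0 i

/-- `F_K`: the affine map `x̂ ↦ B_K x̂ + v₁`. -/
noncomputable def FK (v : Fin 4 → EuclideanSpace ℝ (Fin 3))
    (x : EuclideanSpace ℝ (Fin 3)) : EuclideanSpace ℝ (Fin 3) :=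
  Matrix.toEuclideanLin (Bmat v) x + v 0

/-- The reference tetrahedron `K̂ = {(x,y,z) : x, y, z ≥ 0, x + y + z ≤ 1}`. -/
def refTet : Set (EuclideanSpace ℝ (Fin 3)) :=
  {x | 0 ≤ x 0 ∧ 0 ≤ x 1 ∧ 0 ≤ x 2 ∧ x 0 + x 1 + x 2 ≤ 1}

/-- The reference triangle `K̂₂ = {(s,t) : s, t ≥ 0, s + t ≤ 1}`. -/
def refTri : Set (Fin 2 → ℝ) := {p | 0 ≤ p 0 ∧ 0 ≤ p 1 ∧ p 0 + p 1 ≤ 1}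

/-- The vertex triples of the four faces of the tetrahedron, in the order
`(v₁,v₂,v₃), (v₁,v₂,v₄), (v₁,v₃,v₄), (v₄,v₂,v₃)`. -/
def faceVerts : Fin 4 → Fin 3 → Fin 4 :=
  ![![0, 1, 2], ![0, 1, 3], ![0, 2, 3], ![3, 1, 2]]

/-- The `ℓ`-th face of the tetrahedron with vertices `v`. -/
noncomputable def face (v : Fin 4 → EuclideanSpace ℝ (Fin 3)) (ℓ : Fin 4) :
    Set (EuclideanSpace ℝ (Fin 3)) :=
  convexHull ℝ {v (faceVerts ℓ 0), v (faceVerts ℓ 1), v (faceVerts ℓ 2)}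

/-- The four face parametrizations `φ₁^K(s,t) = F_K(s,t,0)`, `φ₂^K(s,t) = F_K(s,0,t)`,
`φ₃^K(s,t) = F_K(0,s,t)`, `φ₄^K(s,t) = F_K(s,t,1−s−t)`. -/
noncomputable def faceParam (v : Fin 4 → EuclideanSpace ℝ (Fin 3)) :
    Fin 4 → (Fin 2 → ℝ) → EuclideanSpace ℝ (Fin 3) :=
  ![fun p => FK v (WithLp.toLp 2 ![p 0, p 1, 0]),
    fun p => FK v (WithLp.toLp 2 ![p 0, 0, p 1]),
    fun p => FK v (WithLp.toLp 2 ![0, p 0, p 1]),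
    fun p => FK v (WithLp.toLp 2 ![p 0, p 1, 1 - p 0 - p 1])]

namespace TetraProof

abbrev E3 := EuclideanSpace ℝ (Fin 3)

lemma E3_add (x y : E3) (i : Fin 3) : (x + y) i = x i + y i := rfl
lemma E3_smul (c : ℝ) (x : E3) (i : Fin 3) : (c • x) i = c * x i := rfl
lemma E3_sub (x y : E3) (i : Fin 3) : (x - y) i = x i - y i := rfl
lemma E3_zero (i : Fin 3) : (0 : E3) i = 0 := rfl
lemma E3_neg (x : E3) (i : Fin 3) : (-x) i = -(x i) := rfl

/-- generic 3-point convex hull membership -/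
lemma mem_convexHull₃ {V : Type*} [AddCommGroup V] [Module ℝ V] {a b c x : V} {t1 t2 t3 : ℝ}
    (h1 : 0 ≤ t1) (h2 : 0 ≤ t2) (h3 : 0 ≤ t3) (hs : t1 + t2 + t3 = 1)
    (hx : x = t1 • a + t2 • b + t3 • c) :
    x ∈ convexHull ℝ ({a, b, c} : Set V) := by
  subst hx
  have h := (convex_convexHull ℝ ({a, b, c} : Set V)).sum_mem
    (t := (Finset.univ : Finset (Fin 3))) (w := ![t1, t2, t3]) (z := ![a, b, c])
    (fun i _ => by fin_cases i <;> assumption)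
    (by simp [Fin.sum_univ_three, hs])
    (fun i _ => subset_convexHull ℝ _ (by fin_cases i <;> simp))
  simpa [Fin.sum_univ_three] using h

lemma convex_refTet : Convex ℝ refTet := by
  rintro x ⟨hx0, hx1, hx2, hx3⟩ y ⟨hy0, hy1, hy2, hy3⟩ a b ha hb hab
  refine ⟨?_, ?_, ?_, ?_⟩ <;> simp only [E3_add, E3_smul] <;> nlinarith

lemma convex_refTri : Convex ℝ refTri := by
  rintro x ⟨hx0, hx1, hx2⟩ y ⟨hy0, hy1, hy2⟩ a b ha hb hab
  refine ⟨?_, ?_, ?_⟩ <;> simp only [Pi.add_apply, Pi.smul_apply, smul_eq_mul] <;> nlinarith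

lemma refTri_eq : refTri = convexHull ℝ ({0, ![1, 0], ![0, 1]} : Set (Fin 2 → ℝ)) := by
  apply Subset.antisymm
  · rintro p ⟨h0, h1, h2⟩
    refine mem_convexHull₃ (t1 := 1 - p 0 - p 1) (t2 := p 0) (t3 := p 1)
      (by linarith) h0 h1 (by ring) ?_
    funext i
    fin_cases i <;> simp <;> ring
  · apply convexHull_min _ convex_refTri
    rintro p (rfl | rfl | rfl) <;> constructor <;> norm_num

def colMap (u w : E3) : (Fin 2 → ℝ) →ₗ[ℝ] E3 where
  toFun p := p 0 • u + p 1 • w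
  map_add' p q := by simp only [Pi.add_apply, add_smul]; abel
  map_smul' c p := by
    simp only [Pi.smul_apply, smul_eq_mul, RingHom.id_apply, smul_add, smul_smul]

def triMap (a b c : E3) : (Fin 2 → ℝ) → E3 := fun p => colMap (b - a) (c - a) p + a

def triAff (a b c : E3) : (Fin 2 → ℝ) →ᵃ[ℝ] E3 where
  toFun := triMap a b c
  linear := colMap (b - a) (c - a)
  map_vadd' p q := by
    simp only [triMap, vadd_eq_add, map_add]
    abel

lemma triMap_apply_zero (a b c : E3) : triMap a b c 0 = a := by
  simp [triMap, colMap]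

lemma triMap_apply_e0 (a b c : E3) : triMap a b c ![1, 0] = b := by
  simp [triMap, colMap]

lemma triMap_apply_e1 (a b c : E3) : triMap a b c ![0, 1] = c := by
  simp [triMap, colMap]

lemma triMap_image (a b c : E3) :
    triMap a b c '' refTri = convexHull ℝ ({a, b, c} : Set E3) := by
  have : triMap a b c '' refTri = (triAff a b c) '' (convexHull ℝ ({0, ![1,0], ![0,1]} : Set (Fin 2 → ℝ))) := by
    rw [← refTri_eq]; rfl
  rw [this, AffineMap.image_convexHull, Set.image_insert_eq, Set.image_insert_eq,
    Set.image_singleton]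
  have h0 : triAff a b c 0 = a := triMap_apply_zero a b c
  have h1 : triAff a b c ![1, 0] = b := triMap_apply_e0 a b c
  have h2 : triAff a b c ![0, 1] = c := triMap_apply_e1 a b c
  rw [h0, h1, h2]

lemma colMap_injective {u w : E3} (h : LinearIndependent ℝ ![u, w]) :
    Function.Injective (colMap u w) := by
  have hz : ∀ p : Fin 2 → ℝ, colMap u w p = 0 → p = 0 := by
    intro p hp
    obtain ⟨h1, h2⟩ := LinearIndependent.pair_iff.mp h (p 0) (p 1) hp
    funext i; fin_cases i <;> simpa
  intro p q hpq
  have : colMap u w (p - q) = 0 := by rw [map_sub, hpq, sub_self]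
  have := hz _ this
  exact sub_eq_zero.mp (by funext i; exact congrFun this i)

lemma continuous_colMap (u w : E3) : Continuous (colMap u w) :=
  LinearMap.continuous_of_finiteDimensional _

lemma continuous_triMap (a b c : E3) : Continuous (triMap a b c) := by
  exact (continuous_colMap _ _).add continuous_const

lemma FK_apply (v : Fin 4 → E3) (x : E3) (i : Fin 3) :
    FK v x i = (v 1 i - v 0 i) * x 0 + (v 2 i - v 0 i) * x 1 + (v 3 i - v 0 i) * x 2 + v 0 i := by
  show (Matrix.toEuclideanLin (Bmat v) x + v 0) i = _
  rw [E3_add]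
  congr 1
  show ((Bmat v) *ᵥ (WithLp.equiv 2 (Fin 3 → ℝ) x)) i = _
  simp [Matrix.mulVec, dotProduct, Fin.sum_univ_three, Bmat]

lemma triMap_apply (a b c : E3) (p : Fin 2 → ℝ) (i : Fin 3) :
    triMap a b c p i = p 0 * (b i - a i) + p 1 * (c i - a i) + a i := rfl

lemma faceParam_triMap (v : Fin 4 → E3) (ℓ : Fin 4) :
    faceParam v ℓ = triMap (v (faceVerts ℓ 0)) (v (faceVerts ℓ 1)) (v (faceVerts ℓ 2)) := by
  have step : ∀ (x y z : E3) (p : Fin 2 → ℝ) (i : Fin 3),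
      FK v x i = triMap y z (0:E3) p i → True := fun _ _ _ _ _ _ => trivial
  fin_cases ℓ
  · funext p
    refine PiLp.ext fun i => ?_
    show FK v (WithLp.toLp 2 ![p 0, p 1, 0]) i = triMap (v 0) (v 1) (v 2) p i
    rw [FK_apply, triMap_apply]
    simp only [Matrix.cons_val_zero, Matrix.cons_val_one, Matrix.head_cons,
      Matrix.cons_val_two, Matrix.tail_cons]
    ring
  · funext p
    refine PiLp.ext fun i => ?_
    show FK v (WithLp.toLp 2 ![p 0, 0, p 1]) i = triMap (v 0) (v 1) (v 3) p i
    rw [FK_apply, triMap_apply]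
    simp only [Matrix.cons_val_zero, Matrix.cons_val_one, Matrix.head_cons,
      Matrix.cons_val_two, Matrix.tail_cons]
    ring
  · funext p
    refine PiLp.ext fun i => ?_
    show FK v (WithLp.toLp 2 ![0, p 0, p 1]) i = triMap (v 0) (v 2) (v 3) p i
    rw [FK_apply, triMap_apply]
    simp only [Matrix.cons_val_zero, Matrix.cons_val_one, Matrix.head_cons,
      Matrix.cons_val_two, Matrix.tail_cons]
    ring
  · funext p
    refine PiLp.ext fun i => ?_
    show FK v (WithLp.toLp 2 ![p 0, p 1, 1 - p 0 - p 1]) i = triMap (v 3) (v 1) (v 2) p i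
    rw [FK_apply, triMap_apply]
    simp only [Matrix.cons_val_zero, Matrix.cons_val_one, Matrix.head_cons,
      Matrix.cons_val_two, Matrix.tail_cons]
    ring

def wv : Fin 4 → E3 := ![0, WithLp.toLp 2 ![1,0,0], WithLp.toLp 2 ![0,1,0], WithLp.toLp 2 ![0,0,1]]

lemma convex_inter_plane₂ : Convex ℝ {x : E3 | x 2 = 0} := by
  intro x hx y hy a b _ _ _
  simp only [mem_setOf_eq, E3_add, E3_smul] at *
  rw [hx, hy]; ring
lemma convex_inter_plane₁ : Convex ℝ {x : E3 | x 1 = 0} := by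
  intro x hx y hy a b _ _ _
  simp only [mem_setOf_eq, E3_add, E3_smul] at *
  rw [hx, hy]; ring
lemma convex_inter_plane₀ : Convex ℝ {x : E3 | x 0 = 0} := by
  intro x hx y hy a b _ _ _
  simp only [mem_setOf_eq, E3_add, E3_smul] at *
  rw [hx, hy]; ring
lemma convex_inter_plane₃ : Convex ℝ {x : E3 | x 0 + x 1 + x 2 = 1} := by
  intro x hx y hy a b _ _ hab
  simp only [mem_setOf_eq, E3_add, E3_smul] at *
  rw [show a * x 0 + b * y 0 + (a * x 1 + b * y 1) + (a * x 2 + b * y 2)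
    = a * (x 0 + x 1 + x 2) + b * (y 0 + y 1 + y 2) by ring, hx, hy]
  linarith

def activeF : Fin 4 → Set E3 :=
  ![{x : E3 | x 2 = 0}, {x : E3 | x 1 = 0}, {x : E3 | x 0 = 0},
    {x : E3 | x 0 + x 1 + x 2 = 1}]

lemma faceTriangle (ℓ : Fin 4) :
    convexHull ℝ ({wv (faceVerts ℓ 0), wv (faceVerts ℓ 1), wv (faceVerts ℓ 2)} : Set E3)
      = refTet ∩ activeF ℓ := by
  fin_cases ℓ
  · show convexHull ℝ ({wv 0, wv 1, wv 2} : Set E3) = refTet ∩ {x : E3 | x 2 = 0}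
    apply Subset.antisymm
    · apply convexHull_min _ (convex_refTet.inter convex_inter_plane₂)
      rintro x (rfl | rfl | rfl) <;>
        exact ⟨by refine ⟨?_, ?_, ?_, ?_⟩ <;> norm_num [wv, refTet, Matrix.cons_val_two, Matrix.cons_val_three], by norm_num [wv, Matrix.cons_val_two, Matrix.cons_val_three]⟩
    · rintro x ⟨⟨h0, h1, h2, h3⟩, hact⟩
      simp only [mem_setOf_eq] at hact
      refine mem_convexHull₃ (t1 := 1 - x 0 - x 1) (t2 := x 0) (t3 := x 1)
        (by linarith) h0 h1 (by ring) ?_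
      refine PiLp.ext fun i => ?_
      simp only [wv, E3_add, E3_smul, Matrix.cons_val_zero, Matrix.cons_val_one, Matrix.head_cons]
      fin_cases i <;> simp <;> linarith
  · show convexHull ℝ ({wv 0, wv 1, wv 3} : Set E3) = refTet ∩ {x : E3 | x 1 = 0}
    apply Subset.antisymm
    · apply convexHull_min _ (convex_refTet.inter convex_inter_plane₁)
      rintro x (rfl | rfl | rfl) <;>
        exact ⟨by refine ⟨?_, ?_, ?_, ?_⟩ <;> norm_num [wv, refTet, Matrix.cons_val_two, Matrix.cons_val_three], by norm_num [wv, Matrix.cons_val_two, Matrix.cons_val_three]⟩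
    · rintro x ⟨⟨h0, h1, h2, h3⟩, hact⟩
      simp only [mem_setOf_eq] at hact
      refine mem_convexHull₃ (t1 := 1 - x 0 - x 2) (t2 := x 0) (t3 := x 2)
        (by linarith) h0 h2 (by ring) ?_
      refine PiLp.ext fun i => ?_
      simp only [wv, E3_add, E3_smul, Matrix.cons_val_zero, Matrix.cons_val_one, Matrix.head_cons]
      fin_cases i <;> simp <;> linarith
  · show convexHull ℝ ({wv 0, wv 2, wv 3} : Set E3) = refTet ∩ {x : E3 | x 0 = 0}
    apply Subset.antisymm
    · apply convexHull_min _ (convex_refTet.inter convex_inter_plane₀)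
      rintro x (rfl | rfl | rfl) <;>
        exact ⟨by refine ⟨?_, ?_, ?_, ?_⟩ <;> norm_num [wv, refTet, Matrix.cons_val_two, Matrix.cons_val_three], by norm_num [wv, Matrix.cons_val_two, Matrix.cons_val_three]⟩
    · rintro x ⟨⟨h0, h1, h2, h3⟩, hact⟩
      simp only [mem_setOf_eq] at hact
      refine mem_convexHull₃ (t1 := 1 - x 1 - x 2) (t2 := x 1) (t3 := x 2)
        (by linarith) h1 h2 (by ring) ?_
      refine PiLp.ext fun i => ?_
      simp only [wv, E3_add, E3_smul, Matrix.cons_val_zero, Matrix.cons_val_one, Matrix.head_cons]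
      fin_cases i <;> simp <;> linarith
  · show convexHull ℝ ({wv 3, wv 1, wv 2} : Set E3) = refTet ∩ {x : E3 | x 0 + x 1 + x 2 = 1}
    apply Subset.antisymm
    · apply convexHull_min _ (convex_refTet.inter convex_inter_plane₃)
      rintro x (rfl | rfl | rfl) <;>
        exact ⟨by refine ⟨?_, ?_, ?_, ?_⟩ <;> norm_num [wv, refTet, Matrix.cons_val_two, Matrix.cons_val_three], by norm_num [wv, Matrix.cons_val_two, Matrix.cons_val_three]⟩
    · rintro x ⟨⟨h0, h1, h2, h3⟩, hact⟩
      simp only [mem_setOf_eq] at hact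
      refine mem_convexHull₃ (t1 := x 2) (t2 := x 0) (t3 := x 1)
        h2 h0 h1 (by linarith) ?_
      refine PiLp.ext fun i => ?_
      simp only [wv, E3_add, E3_smul, Matrix.cons_val_zero, Matrix.cons_val_one, Matrix.head_cons]
      fin_cases i <;> simp <;> linarith

lemma continuous_coord (i : Fin 3) : Continuous fun x : E3 => x i :=
  (EuclideanSpace.proj i).continuous

lemma refTet_inter_form : refTet =
    ({x : E3 | 0 ≤ x 0} ∩ {x : E3 | 0 ≤ x 1}) ∩
      ({x : E3 | 0 ≤ x 2} ∩ {x : E3 | x 0 + x 1 + x 2 ≤ 1}) := by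
  ext x
  simp only [refTet, mem_setOf_eq, mem_inter_iff]
  tauto

lemma isClosed_refTet : IsClosed refTet := by
  rw [refTet_inter_form]
  have h0 : IsClosed {x : E3 | 0 ≤ x 0} := isClosed_le continuous_const (continuous_coord 0)
  have h1 : IsClosed {x : E3 | 0 ≤ x 1} := isClosed_le continuous_const (continuous_coord 1)
  have h2 : IsClosed {x : E3 | 0 ≤ x 2} := isClosed_le continuous_const (continuous_coord 2)
  have h3 : IsClosed {x : E3 | x 0 + x 1 + x 2 ≤ 1} :=
    isClosed_le (((continuous_coord 0).add (continuous_coord 1)).add (continuous_coord 2))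
      continuous_const
  exact (h0.inter h1).inter (h2.inter h3)

lemma interior_refTet :
    interior refTet = {x : E3 | 0 < x 0 ∧ 0 < x 1 ∧ 0 < x 2 ∧ x 0 + x 1 + x 2 < 1} := by
  apply Subset.antisymm
  · intro x hx
    obtain ⟨ε, hε, hball⟩ := Metric.isOpen_iff.mp isOpen_interior x hx
    have hball' : Metric.ball x ε ⊆ refTet := hball.trans interior_subset
    have key : ∀ u : E3, ‖u‖ = 1 → x + (ε/2) • u ∈ refTet := by
      intro u hu
      apply hball'
      simp only [Metric.mem_ball, dist_eq_norm, add_sub_cancel_left, norm_smul, hu,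
        Real.norm_eq_abs, mul_one, abs_of_pos (by linarith : (0:ℝ) < ε/2)]
      linarith
    have hcoord : ∀ i : Fin 3, 0 < x i := by
      intro i
      have h := key (-(EuclideanSpace.single i (1:ℝ))) (by simp)
      have h2 : (x + (ε/2) • -EuclideanSpace.single i (1:ℝ)) i = x i - ε/2 := by
        simp [E3_add, E3_smul, E3_neg, EuclideanSpace.single_apply, sub_eq_add_neg]
      obtain ⟨a0, a1, a2, a3⟩ := h
      have : 0 ≤ x i - ε/2 := by
        fin_cases i
        · rw [← h2]; exact a0
        · rw [← h2]; exact a1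
        · rw [← h2]; exact a2
      linarith
    have hsum : x 0 + x 1 + x 2 < 1 := by
      have h := key (EuclideanSpace.single (0 : Fin 3) (1:ℝ)) (by simp)
      obtain ⟨a0, a1, a2, a3⟩ := h
      have e0 : (x + (ε/2) • EuclideanSpace.single (0 : Fin 3) (1:ℝ)) 0 = x 0 + ε/2 := by
        simp [E3_add, E3_smul, EuclideanSpace.single_apply]
      have e1 : (x + (ε/2) • EuclideanSpace.single (0 : Fin 3) (1:ℝ)) 1 = x 1 := by
        simp [E3_add, E3_smul, EuclideanSpace.single_apply]
      have e2 : (x + (ε/2) • EuclideanSpace.single (0 : Fin 3) (1:ℝ)) 2 = x 2 := by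
        simp [E3_add, E3_smul, EuclideanSpace.single_apply]
      rw [e0, e1, e2] at a3
      linarith
    exact ⟨hcoord 0, hcoord 1, hcoord 2, hsum⟩
  · apply interior_maximal
    · rintro x ⟨h0, h1, h2, h3⟩
      exact ⟨le_of_lt h0, le_of_lt h1, le_of_lt h2, le_of_lt h3⟩
    · have o0 : IsOpen {x : E3 | 0 < x 0} := isOpen_lt continuous_const (continuous_coord 0)
      have o1 : IsOpen {x : E3 | 0 < x 1} := isOpen_lt continuous_const (continuous_coord 1)
      have o2 : IsOpen {x : E3 | 0 < x 2} := isOpen_lt continuous_const (continuous_coord 2)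
      have o3 : IsOpen {x : E3 | x 0 + x 1 + x 2 < 1} :=
        isOpen_lt (((continuous_coord 0).add (continuous_coord 1)).add (continuous_coord 2))
          continuous_const
      have : {x : E3 | 0 < x 0 ∧ 0 < x 1 ∧ 0 < x 2 ∧ x 0 + x 1 + x 2 < 1} =
          ({x : E3 | 0 < x 0} ∩ {x : E3 | 0 < x 1}) ∩
            ({x : E3 | 0 < x 2} ∩ {x : E3 | x 0 + x 1 + x 2 < 1}) := by
        ext x; simp only [mem_setOf_eq, mem_inter_iff]; tauto
      rw [this]
      exact (o0.inter o1).inter (o2.inter o3)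

lemma frontier_refTet : frontier refTet = ⋃ ℓ : Fin 4, (refTet ∩ activeF ℓ) := by
  rw [isClosed_refTet.frontier_eq, interior_refTet]
  ext x
  simp only [mem_diff, mem_setOf_eq, mem_iUnion, mem_inter_iff]
  constructor
  · rintro ⟨⟨h0, h1, h2, h3⟩, hne⟩
    push_neg at hne
    by_cases c0 : x 0 = 0
    · exact ⟨2, ⟨h0, h1, h2, h3⟩, by simpa [activeF] using c0⟩
    by_cases c1 : x 1 = 0
    · exact ⟨1, ⟨h0, h1, h2, h3⟩, by simpa [activeF] using c1⟩
    by_cases c2 : x 2 = 0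
    · exact ⟨0, ⟨h0, h1, h2, h3⟩, by simpa [activeF] using c2⟩
    · have := hne (lt_of_le_of_ne h0 (Ne.symm c0)) (lt_of_le_of_ne h1 (Ne.symm c1))
        (lt_of_le_of_ne h2 (Ne.symm c2))
      exact ⟨3, ⟨h0, h1, h2, h3⟩, by simpa [activeF] using le_antisymm h3 this⟩
  · rintro ⟨ℓ, hmem, hact⟩
    refine ⟨hmem, ?_⟩
    rintro ⟨s0, s1, s2, s3⟩
    fin_cases ℓ <;> simp only [activeF, Matrix.cons_val_zero, Matrix.cons_val_one,
      Matrix.head_cons, mem_setOf_eq] at hact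
    · exact absurd hact (ne_of_gt s2)
    · exact absurd hact (ne_of_gt s1)
    · exact absurd hact (ne_of_gt s0)
    · exact absurd hact (ne_of_lt s3)

section WithDet

variable (v : Fin 4 → E3)

lemma toEuc_inj (hdet : (Bmat v).det ≠ 0) :
    Function.Injective (Matrix.toEuclideanLin (Bmat v)) := by
  have hBunit : IsUnit (Bmat v).det := isUnit_iff_ne_zero.mpr hdet
  intro x y h
  have h2 : (Bmat v) *ᵥ (WithLp.equiv 2 (Fin 3 → ℝ) x) =
      (Bmat v) *ᵥ (WithLp.equiv 2 (Fin 3 → ℝ) y) := by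
    have := congrArg (WithLp.equiv 2 (Fin 3 → ℝ)) h
    simpa [Matrix.ofLp_toEuclideanLin_apply] using this
  have h3 : ∀ z : Fin 3 → ℝ, (Bmat v)⁻¹ *ᵥ ((Bmat v) *ᵥ z) = z := by
    intro z
    rw [Matrix.mulVec_mulVec, Matrix.nonsing_inv_mul _ hBunit, Matrix.one_mulVec]
  have h4 : WithLp.equiv 2 (Fin 3 → ℝ) x = WithLp.equiv 2 (Fin 3 → ℝ) y := by
    rw [← h3 (WithLp.equiv 2 (Fin 3 → ℝ) x), ← h3 (WithLp.equiv 2 (Fin 3 → ℝ) y), h2]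
  exact (WithLp.equiv 2 (Fin 3 → ℝ)).injective h4

def FKhomeo (hdet : (Bmat v).det ≠ 0) : E3 ≃ₜ E3 :=
  (LinearEquiv.ofBijective (Matrix.toEuclideanLin (Bmat v))
    ⟨toEuc_inj v hdet, (LinearMap.injective_iff_surjective).mp (toEuc_inj v hdet)⟩
    ).toContinuousLinearEquiv.toHomeomorph.trans
    (Homeomorph.addRight (v 0))

lemma FKhomeo_apply (hdet : (Bmat v).det ≠ 0) (x : E3) : FKhomeo v hdet x = FK v x := rfl

lemma FK_triMap (x y z : E3) (p : Fin 2 → ℝ) :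
    FK v (triMap x y z p) = triMap (FK v x) (FK v y) (FK v z) p := by
  refine PiLp.ext fun i => ?_
  rw [FK_apply, triMap_apply, triMap_apply, triMap_apply, triMap_apply,
    FK_apply, FK_apply, FK_apply]
  ring

lemma FK_wv : ∀ j, FK v (wv j) = v j := by
  intro j
  fin_cases j <;>
    · refine PiLp.ext fun i => ?_
      rw [FK_apply]
      simp [wv, E3_zero]

lemma frontier_FK_image (hdet : (Bmat v).det ≠ 0) :
    frontier (FK v '' refTet) = ⋃ ℓ : Fin 4, faceParam v ℓ '' refTri := by
  have h1 : FK v '' refTet = FKhomeo v hdet '' refTet := rfl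
  rw [h1, ← Homeomorph.image_frontier, frontier_refTet, image_iUnion]
  refine iUnion_congr fun ℓ => ?_
  rw [← faceTriangle, ← triMap_image, faceParam_triMap, Set.image_image]
  refine Set.image_congr fun p _ => ?_
  show FK v (triMap (wv (faceVerts ℓ 0)) (wv (faceVerts ℓ 1)) (wv (faceVerts ℓ 2)) p) = _
  rw [FK_triMap, FK_wv, FK_wv, FK_wv]

lemma li_pair (hv : AffineIndependent ℝ v) (ℓ : Fin 4) :
    LinearIndependent ℝ ![v (faceVerts ℓ 1) - v (faceVerts ℓ 0),
      v (faceVerts ℓ 2) - v (faceVerts ℓ 0)] := by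
  have hinj : Function.Injective (faceVerts ℓ) := by fin_cases ℓ <;> decide
  have h3 : AffineIndependent ℝ (v ∘ faceVerts ℓ) :=
    hv.comp_embedding ⟨faceVerts ℓ, hinj⟩
  have li := (affineIndependent_iff_linearIndependent_vsub ℝ (v ∘ faceVerts ℓ) 0).mp h3
  have g : Fin 2 → {x : Fin 3 // x ≠ 0} := ![⟨1, by decide⟩, ⟨2, by decide⟩]
  have ginj : Function.Injective (![⟨1, by decide⟩, ⟨2, by decide⟩] : Fin 2 → {x : Fin 3 // x ≠ 0}) := by
    intro a b hab
    fin_cases a <;> fin_cases b <;> simp_all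
  have li2 := li.comp _ ginj
  have heq : ((fun i : {x : Fin 3 // x ≠ 0} => (v ∘ faceVerts ℓ) (i : Fin 3) -ᵥ
      (v ∘ faceVerts ℓ) 0) ∘ (![⟨1, by decide⟩, ⟨2, by decide⟩] :
      Fin 2 → {x : Fin 3 // x ≠ 0})) =
      ![v (faceVerts ℓ 1) - v (faceVerts ℓ 0), v (faceVerts ℓ 2) - v (faceVerts ℓ 0)] := by
    funext i
    fin_cases i <;> simp [vsub_eq_sub]
  rwa [heq] at li2

end WithDet

lemma hausdorff_null_line (b u : E3) : μH[2] (Set.range (fun t : ℝ => t • u + b)) = 0 := by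
  have lip : LipschitzWith ‖u‖₊ (fun t : ℝ => t • u + b) := by
    apply LipschitzWith.of_dist_le_mul
    intro s t
    have : (s • u + b) - (t • u + b) = (s - t) • u := by
      rw [sub_smul]; abel
    rw [dist_eq_norm, this, norm_smul, dist_eq_norm]
    simp [Real.norm_eq_abs, mul_comm]
  have hdim : dimH (Set.range (fun t : ℝ => t • u + b)) ≤ 1 := by
    have h := lip.dimH_image_le Set.univ
    rw [Set.image_univ] at h
    exact h.trans_eq (Real.dimH_univ)
  have : dimH (Set.range (fun t : ℝ => t • u + b)) < ((2:ℝ≥0) : ℝ≥0∞) := by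
    refine lt_of_le_of_lt hdim ?_
    norm_num
  have h0 := hausdorffMeasure_of_dimH_lt this
  simpa using h0

lemma volume_refTri : volume refTri = ENNReal.ofReal (1/2 : ℝ) := by
  have hmp := MeasureTheory.volume_preserving_finTwoArrow ℝ
  set T : Set (ℝ × ℝ) := {q : ℝ × ℝ | 0 ≤ q.1 ∧ 0 ≤ q.2 ∧ q.1 + q.2 ≤ 1} with hT
  have hTmeas : MeasurableSet T := by
    apply MeasurableSet.inter
    · exact measurableSet_le measurable_const measurable_fst
    apply MeasurableSet.inter
    · exact measurableSet_le measurable_const measurable_snd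
    · exact measurableSet_le (measurable_fst.add measurable_snd) measurable_const
  have hpre : refTri = (MeasurableEquiv.finTwoArrow : (Fin 2 → ℝ) ≃ᵐ ℝ × ℝ) ⁻¹' T := rfl
  rw [hpre, hmp.measure_preimage hTmeas.nullMeasurableSet]
  have hsec : ∀ x : ℝ, (Prod.mk x ⁻¹' T) = if 0 ≤ x then Icc 0 (1 - x) else ∅ := by
    intro x
    ext y
    by_cases hx : 0 ≤ x <;> simp [hT, hx, mem_Icc] <;> intro _ <;> constructor <;> intro <;> linarith
  have hvol : (volume : Measure (ℝ × ℝ)) T = ∫⁻ x : ℝ, volume (Prod.mk x ⁻¹' T) := by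
    rw [MeasureTheory.Measure.volume_eq_prod, Measure.prod_apply hTmeas]
  rw [hvol]
  have hF : (fun x : ℝ => volume (Prod.mk x ⁻¹' T)) =
      (Icc (0:ℝ) 1).indicator (fun x => ENNReal.ofReal (1 - x)) := by
    funext x
    rw [hsec x]
    by_cases hx : 0 ≤ x
    · by_cases hx1 : x ≤ 1
      · rw [if_pos hx, Real.volume_Icc, Set.indicator_of_mem (by exact ⟨hx, hx1⟩)]
        norm_num
      · rw [if_pos hx, Real.volume_Icc, Set.indicator_of_notMem (by simp [mem_Icc]; intro; linarith)]
        rw [ENNReal.ofReal_eq_zero]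
        linarith
    · rw [if_neg hx, Set.indicator_of_notMem (by simp [mem_Icc]; intro; linarith)]
      simp
  rw [hF]
  refine (lintegral_indicator measurableSet_Icc _).trans ?_
  have hint : IntegrableOn (fun x : ℝ => 1 - x) (Icc (0:ℝ) 1) volume :=
    ContinuousOn.integrableOn_compact isCompact_Icc
      ((continuous_const.sub continuous_id).continuousOn)
  rw [← MeasureTheory.ofReal_integral_eq_lintegral_ofReal hint
    ((ae_restrict_iff' measurableSet_Icc).mpr (Filter.Eventually.of_forall
      (fun x hx => by simp only [Pi.zero_apply]; linarith [hx.2])))]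
  congr 1
  rw [MeasureTheory.integral_Icc_eq_integral_Ioc,
    ← intervalIntegral.integral_of_le (by norm_num : (0:ℝ) ≤ 1)]
  have h1 : ∫ x in (0:ℝ)..1, (1 - x) = (∫ x in (0:ℝ)..1, (1:ℝ)) - ∫ x in (0:ℝ)..1, x :=
    intervalIntegral.integral_sub intervalIntegrable_const intervalIntegral.intervalIntegrable_id
  rw [h1, intervalIntegral.integral_const, integral_id]
  norm_num
lemma key_linear (L : (Fin 2 → ℝ) →ₗ[ℝ] EuclideanSpace ℝ (Fin 3)) (hL : Function.Injective L) :
    ∃ c : ℝ≥0∞, c ≠ ⊤ ∧ ∀ A : Set (Fin 2 → ℝ), MeasurableSet A →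
      μH[2] (L '' A) = c * volume A := by
  set W := LinearMap.range L with hWdef
  have hW : Module.finrank ℝ W = 2 := by
    rw [LinearMap.finrank_range_of_inj hL]; simp
  let bW : OrthonormalBasis (Fin 2) ℝ W := (stdOrthonormalBasis ℝ W).reindex (finCongr hW)
  let iso : W ≃ₗᵢ[ℝ] EuclideanSpace ℝ (Fin 2) := bW.repr
  let ι : EuclideanSpace ℝ (Fin 2) →ₗᵢ[ℝ] EuclideanSpace ℝ (Fin 3) :=
    W.subtypeₗᵢ.comp iso.symm.toLinearIsometry
  let M : (Fin 2 → ℝ) →ₗ[ℝ] EuclideanSpace ℝ (Fin 2) :=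
    (iso.toLinearEquiv : W →ₗ[ℝ] EuclideanSpace ℝ (Fin 2)).comp L.rangeRestrict
  have hLM : ∀ x, L x = ι (M x) := by
    intro x
    simp [ι, M, Submodule.subtypeₗᵢ]
    rfl
  have hMinj : Function.Injective M := by
    intro x y hxy
    apply hL
    rw [hLM x, hLM y, hxy]
  let eq2 : EuclideanSpace ℝ (Fin 2) ≃ₗ[ℝ] (Fin 2 → ℝ) := WithLp.linearEquiv 2 ℝ (Fin 2 → ℝ)
  let N : (Fin 2 → ℝ) →ₗ[ℝ] (Fin 2 → ℝ) := (eq2 : _ →ₗ[ℝ] _).comp M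
  have hNinj : Function.Injective N := by
    intro x y hxy
    exact hMinj (eq2.injective.eq_iff.mp hxy)
  have hNsurj : Function.Surjective N := (LinearMap.injective_iff_surjective).mp hNinj
  let Neq : (Fin 2 → ℝ) ≃ₗ[ℝ] (Fin 2 → ℝ) := LinearEquiv.ofBijective N ⟨hNinj, hNsurj⟩
  let Ncle := Neq.toContinuousLinearEquiv
  haveI : (μH[2] : Measure (EuclideanSpace ℝ (Fin 2))).IsAddHaarMeasure := by
    have h := MeasureTheory.isAddHaarMeasure_hausdorffMeasure (E := EuclideanSpace ℝ (Fin 2))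
    simpa using h
  have hκ : (μH[2] : Measure (EuclideanSpace ℝ (Fin 2))) =
      (Measure.addHaarScalarFactor (μH[2] : Measure (EuclideanSpace ℝ (Fin 2))) volume) • volume :=
    Measure.isAddLeftInvariant_eq_smul _ _
  set κ := Measure.addHaarScalarFactor (μH[2] : Measure (EuclideanSpace ℝ (Fin 2))) volume
  refine ⟨κ * ENNReal.ofReal |LinearMap.det N|, by finiteness, fun A hA => ?_⟩
  have h1 : L '' A = ι '' (M '' A) := by
    rw [Set.image_image]; exact Set.image_congr fun x _ => hLM x
  rw [h1, ι.isometry.hausdorffMeasure_image (Or.inl (by norm_num))]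
  have h2 : (M '' A : Set (EuclideanSpace ℝ (Fin 2))) =
      (MeasurableEquiv.toLp 2 (Fin 2 → ℝ)).symm.symm '' (N '' A) := by
    rw [Set.image_image]
    exact Set.image_congr fun x _ => rfl
  have hNA : MeasurableSet (N '' A) :=
    (Ncle.toHomeomorph.measurableEmbedding.measurableSet_image).mpr hA
  have h3 : volume ((MeasurableEquiv.toLp 2 (Fin 2 → ℝ)).symm.symm '' (N '' A)) = volume (N '' A) := by
    rw [MeasurableEquiv.image_symm]
    exact (EuclideanSpace.volume_preserving_symm_measurableEquiv_toLp (Fin 2)).measure_preimage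
      hNA.nullMeasurableSet
  rw [hκ, Measure.smul_apply, h2, h3, Measure.addHaar_image_linearMap volume N A, ENNReal.smul_def, smul_eq_mul]
  ring

lemma key_affine (L : (Fin 2 → ℝ) →ₗ[ℝ] E3) (hL : Function.Injective L) (b : E3) :
    ∃ c : ℝ≥0∞, c ≠ ⊤ ∧ ∀ A : Set (Fin 2 → ℝ), MeasurableSet A →
      μH[2] ((fun p => L p + b) '' A) = c * volume A := by
  obtain ⟨c, hc, hkey⟩ := key_linear L hL
  refine ⟨c, hc, fun A hA => ?_⟩
  have h1 : (fun p => L p + b) '' A = (fun x : E3 => x + b) '' (L '' A) := by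
    rw [Set.image_image]
  have hiso : Isometry (fun x : E3 => x + b) := Isometry.of_dist_eq fun x y => by
    simp [dist_eq_norm]
  rw [h1, hiso.hausdorffMeasure_image (Or.inl (by norm_num)), hkey A hA]

lemma isCompact_refTri : IsCompact refTri := by
  rw [refTri_eq]
  exact (Set.toFinite _).isCompact_convexHull (𝕜 := ℝ)

lemma measurableSet_refTri : MeasurableSet refTri :=
  isCompact_refTri.isClosed.measurableSet

section FaceIntegral

variable (v : Fin 4 → E3)

lemma isCompact_faceSet (ℓ : Fin 4) :
    IsCompact (convexHull ℝ ({v (faceVerts ℓ 0), v (faceVerts ℓ 1), v (faceVerts ℓ 2)} : Set E3)) :=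
  (Set.toFinite _).isCompact_convexHull (𝕜 := ℝ)

lemma face_integral (hv : AffineIndependent ℝ v) (hdet : (Bmat v).det ≠ 0)
    (ψ : E3 → ℝ) (hψ : ContinuousOn ψ (frontier (FK v '' refTet))) (ℓ : Fin 4) :
    IntegrableOn ψ (convexHull ℝ ({v (faceVerts ℓ 0), v (faceVerts ℓ 1), v (faceVerts ℓ 2)} : Set E3)) μH[2] ∧
    (∫ x in convexHull ℝ ({v (faceVerts ℓ 0), v (faceVerts ℓ 1), v (faceVerts ℓ 2)} : Set E3), ψ x ∂μH[2]) =
      2 * (μH[2] (convexHull ℝ ({v (faceVerts ℓ 0), v (faceVerts ℓ 1), v (faceVerts ℓ 2)} : Set E3))).toReal *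
        ∫ p in refTri, ψ (faceParam v ℓ p) := by
  set a := v (faceVerts ℓ 0)
  set b := v (faceVerts ℓ 1)
  set c := v (faceVerts ℓ 2)
  set L : (Fin 2 → ℝ) →ₗ[ℝ] E3 := colMap (b - a) (c - a) with hLdef
  have hLinj : Function.Injective L := colMap_injective (li_pair v hv ℓ)
  set φ := faceParam v ℓ with hφdef
  have hφ : φ = fun p => L p + a := by
    rw [hφdef, faceParam_triMap]; rfl
  have hφcont : Continuous φ := by
    rw [hφ]; exact (continuous_colMap _ _).add continuous_const
  set F : Set E3 := convexHull ℝ ({a, b, c} : Set E3) with hFdef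
  have himg : φ '' refTri = F := by
    rw [hφdef, faceParam_triMap]; exact triMap_image a b c
  have hFcompact : IsCompact F := (Set.toFinite _).isCompact_convexHull (𝕜 := ℝ)
  have hFmeas : MeasurableSet F := hFcompact.isClosed.measurableSet
  have hFsub : F ⊆ frontier (FK v '' refTet) := by
    rw [frontier_FK_image v hdet, ← himg]
    exact Set.subset_iUnion (fun j => faceParam v j '' refTri) ℓ
  obtain ⟨cst, hcst, hkey⟩ := key_affine L hLinj a
  have hmesF : μH[2] F = cst * ENNReal.ofReal (1/2 : ℝ) := by
    rw [← himg, ← volume_refTri]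
    have := hkey refTri measurableSet_refTri
    rw [← hφ] at this
    exact this
  -- the pushforward identity
  have hrestrict : μH[2].restrict F = Measure.map φ ((cst • volume).restrict refTri) := by
    ext S hS
    rw [Measure.restrict_apply hS, Measure.map_apply hφcont.measurable hS,
      Measure.restrict_apply (hφcont.measurable hS)]
    have hSint : S ∩ F = φ '' (φ ⁻¹' S ∩ refTri) := by
      rw [← himg]
      ext x
      constructor
      · rintro ⟨hxS, p, hp, rfl⟩
        exact ⟨p, ⟨hxS, hp⟩, rfl⟩
      · rintro ⟨p, ⟨hpS, hp⟩, rfl⟩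
        exact ⟨hpS, p, hp, rfl⟩
    rw [hSint]
    have := hkey (φ ⁻¹' S ∩ refTri) ((hφcont.measurable hS).inter measurableSet_refTri)
    rw [← hφ] at this
    rw [this, Measure.smul_apply, smul_eq_mul]
  have hψF : AEStronglyMeasurable ψ (μH[2].restrict F) :=
    ContinuousOn.aestronglyMeasurable (hψ.mono hFsub) hFmeas
  have hψmap : AEStronglyMeasurable ψ (Measure.map φ ((cst • volume).restrict refTri)) := by
    rw [← hrestrict]; exact hψF
  have hcomp : IntegrableOn (fun p => ψ (φ p)) refTri volume := by
    apply ContinuousOn.integrableOn_compact isCompact_refTri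
    apply hψ.comp hφcont.continuousOn
    intro p hp
    apply hFsub
    rw [← himg]
    exact ⟨p, hp, rfl⟩
  have hint : IntegrableOn ψ F μH[2] := by
    unfold IntegrableOn
    rw [hrestrict]
    rw [integrable_map_measure hψmap hφcont.aemeasurable]
    rw [Measure.restrict_smul]
    exact Integrable.smul_measure hcomp hcst
  refine ⟨hint, ?_⟩
  have hIeq : (∫ x in F, ψ x ∂μH[2]) = cst.toReal * ∫ p in refTri, ψ (φ p) := by
    rw [show (∫ x in F, ψ x ∂μH[2]) = ∫ x, ψ x ∂(μH[2].restrict F) from rfl, hrestrict,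
      integral_map hφcont.aemeasurable hψmap, Measure.restrict_smul, integral_smul_measure,
      smul_eq_mul]
  rw [hIeq, hmesF]
  rw [ENNReal.toReal_mul]
  rw [ENNReal.toReal_ofReal (by norm_num)]
  ring

end FaceIntegral

lemma active_pair_line (ℓ ℓ' : Fin 4) (h : ℓ ≠ ℓ') :
    ∃ a w : E3, activeF ℓ ∩ activeF ℓ' ⊆ Set.range (fun t : ℝ => t • w + a) := by
  fin_cases ℓ <;> fin_cases ℓ' <;> first
  | exact absurd rfl h
  | · refine ⟨0, wv 1, ?_⟩
      first
      | (rintro x ⟨h1, h2⟩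
         have e1 : x 2 = 0 := h1
         have e2 : x 1 = 0 := h2
         refine ⟨x 0, PiLp.ext fun i => ?_⟩
         fin_cases i <;> simp [wv, E3_add, E3_smul, E3_zero] <;> linarith)
      | (rintro x ⟨h1, h2⟩
         have e1 : x 1 = 0 := h1
         have e2 : x 2 = 0 := h2
         refine ⟨x 0, PiLp.ext fun i => ?_⟩
         fin_cases i <;> simp [wv, E3_add, E3_smul, E3_zero] <;> linarith)
  | · refine ⟨0, wv 2, ?_⟩
      first
      | (rintro x ⟨h1, h2⟩
         have e1 : x 2 = 0 := h1
         have e2 : x 0 = 0 := h2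
         refine ⟨x 1, PiLp.ext fun i => ?_⟩
         fin_cases i <;> simp [wv, E3_add, E3_smul, E3_zero] <;> linarith)
      | (rintro x ⟨h1, h2⟩
         have e1 : x 0 = 0 := h1
         have e2 : x 2 = 0 := h2
         refine ⟨x 1, PiLp.ext fun i => ?_⟩
         fin_cases i <;> simp [wv, E3_add, E3_smul, E3_zero] <;> linarith)
  | · refine ⟨0, wv 3, ?_⟩
      first
      | (rintro x ⟨h1, h2⟩
         have e1 : x 1 = 0 := h1
         have e2 : x 0 = 0 := h2
         refine ⟨x 2, PiLp.ext fun i => ?_⟩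
         fin_cases i <;> simp [wv, E3_add, E3_smul, E3_zero] <;> linarith)
      | (rintro x ⟨h1, h2⟩
         have e1 : x 0 = 0 := h1
         have e2 : x 1 = 0 := h2
         refine ⟨x 2, PiLp.ext fun i => ?_⟩
         fin_cases i <;> simp [wv, E3_add, E3_smul, E3_zero] <;> linarith)
  | · refine ⟨wv 1, wv 2 - wv 1, ?_⟩
      first
      | (rintro x ⟨h1, h2⟩
         have e1 : x 2 = 0 := h1
         have e2 : x 0 + x 1 + x 2 = 1 := h2
         refine ⟨x 1, PiLp.ext fun i => ?_⟩
         fin_cases i <;> simp [wv, E3_add, E3_smul, E3_zero, E3_sub] <;> linarith)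
      | (rintro x ⟨h1, h2⟩
         have e1 : x 0 + x 1 + x 2 = 1 := h1
         have e2 : x 2 = 0 := h2
         refine ⟨x 1, PiLp.ext fun i => ?_⟩
         fin_cases i <;> simp [wv, E3_add, E3_smul, E3_zero, E3_sub] <;> linarith)
  | · refine ⟨wv 1, wv 3 - wv 1, ?_⟩
      first
      | (rintro x ⟨h1, h2⟩
         have e1 : x 1 = 0 := h1
         have e2 : x 0 + x 1 + x 2 = 1 := h2
         refine ⟨x 2, PiLp.ext fun i => ?_⟩
         fin_cases i <;> simp [wv, E3_add, E3_smul, E3_zero, E3_sub] <;> linarith)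
      | (rintro x ⟨h1, h2⟩
         have e1 : x 0 + x 1 + x 2 = 1 := h1
         have e2 : x 1 = 0 := h2
         refine ⟨x 2, PiLp.ext fun i => ?_⟩
         fin_cases i <;> simp [wv, E3_add, E3_smul, E3_zero, E3_sub] <;> linarith)
  | · refine ⟨wv 2, wv 3 - wv 2, ?_⟩
      first
      | (rintro x ⟨h1, h2⟩
         have e1 : x 0 = 0 := h1
         have e2 : x 0 + x 1 + x 2 = 1 := h2
         refine ⟨x 2, PiLp.ext fun i => ?_⟩
         fin_cases i <;> simp [wv, E3_add, E3_smul, E3_zero, E3_sub] <;> linarith)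
      | (rintro x ⟨h1, h2⟩
         have e1 : x 0 + x 1 + x 2 = 1 := h1
         have e2 : x 0 = 0 := h2
         refine ⟨x 2, PiLp.ext fun i => ?_⟩
         fin_cases i <;> simp [wv, E3_add, E3_smul, E3_zero, E3_sub] <;> linarith)

lemma FK_inj (v : Fin 4 → E3) (hdet : (Bmat v).det ≠ 0) : Function.Injective (FK v) := by
  intro x y h
  apply toEuc_inj v hdet
  have : Matrix.toEuclideanLin (Bmat v) x + v 0 = Matrix.toEuclideanLin (Bmat v) y + v 0 := h
  exact add_right_cancel this

lemma face_eq_image (v : Fin 4 → E3) (ℓ : Fin 4) :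
    convexHull ℝ ({v (faceVerts ℓ 0), v (faceVerts ℓ 1), v (faceVerts ℓ 2)} : Set E3) =
      FK v '' (refTet ∩ activeF ℓ) := by
  rw [← faceTriangle, ← triMap_image, ← triMap_image, Set.image_image]
  refine (Set.image_congr fun p _ => ?_).symm
  rw [FK_triMap, FK_wv, FK_wv, FK_wv]

lemma face_pair_null (v : Fin 4 → E3) (hdet : (Bmat v).det ≠ 0) (ℓ ℓ' : Fin 4) (h : ℓ ≠ ℓ') :
    μH[2] (convexHull ℝ ({v (faceVerts ℓ 0), v (faceVerts ℓ 1), v (faceVerts ℓ 2)} : Set E3) ∩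
      convexHull ℝ ({v (faceVerts ℓ' 0), v (faceVerts ℓ' 1), v (faceVerts ℓ' 2)} : Set E3)) = 0 := by
  rw [face_eq_image v ℓ, face_eq_image v ℓ', ← Set.image_inter (FK_inj v hdet)]
  obtain ⟨a, w, hsub⟩ := active_pair_line ℓ ℓ' h
  refine measure_mono_null ?_
    (hausdorff_null_line (FK v a) (Matrix.toEuclideanLin (Bmat v) w))
  · rintro _ ⟨x, ⟨⟨_, hact⟩, ⟨_, hact'⟩⟩, rfl⟩
    obtain ⟨t, ht⟩ := hsub ⟨hact, hact'⟩
    refine ⟨t, ?_⟩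
    show t • Matrix.toEuclideanLin (Bmat v) w + FK v a = FK v x
    rw [← ht]
    show t • Matrix.toEuclideanLin (Bmat v) w + (Matrix.toEuclideanLin (Bmat v) a + v 0) =
      Matrix.toEuclideanLin (Bmat v) (t • w + a) + v 0
    rw [map_add, LinearMap.map_smul]
    abel

theorem main' (v : Fin 4 → E3)
    (hv : AffineIndependent ℝ v) (hdet : 0 < (Bmat v).det)
    (ψ : E3 → ℝ)
    (hψ : ContinuousOn ψ (frontier (FK v '' refTet))) :
    (∫ x in frontier (FK v '' refTet), ψ x ∂μH[2]) =
      ∑ ℓ : Fin 4, 2 * (μH[2] (convexHull ℝ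
          ({v (faceVerts ℓ 0), v (faceVerts ℓ 1), v (faceVerts ℓ 2)} : Set E3))).toReal *
        ∫ p in refTri, ψ (faceParam v ℓ p) := by
  have hd : (Bmat v).det ≠ 0 := ne_of_gt hdet
  set f : Fin 4 → Set E3 := fun ℓ => convexHull ℝ
    ({v (faceVerts ℓ 0), v (faceVerts ℓ 1), v (faceVerts ℓ 2)} : Set E3) with hf
  have himg : ∀ ℓ, faceParam v ℓ '' refTri = f ℓ := fun ℓ => by
    rw [faceParam_triMap]; exact triMap_image _ _ _
  have hfront : frontier (FK v '' refTet) = f 0 ∪ (f 1 ∪ (f 2 ∪ f 3)) := by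
    rw [frontier_FK_image v hd]
    ext x
    simp only [mem_iUnion, mem_union]
    constructor
    · rintro ⟨ℓ, hx⟩
      rw [himg ℓ] at hx
      fin_cases ℓ
      · exact Or.inl hx
      · exact Or.inr (Or.inl hx)
      · exact Or.inr (Or.inr (Or.inl hx))
      · exact Or.inr (Or.inr (Or.inr hx))
    · rintro (hx | hx | hx | hx)
      exacts [⟨0, (himg 0).symm ▸ hx⟩, ⟨1, (himg 1).symm ▸ hx⟩,
        ⟨2, (himg 2).symm ▸ hx⟩, ⟨3, (himg 3).symm ▸ hx⟩]
  obtain ⟨int0, eq0⟩ := face_integral v hv hd ψ hψ 0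
  obtain ⟨int1, eq1⟩ := face_integral v hv hd ψ hψ 1
  obtain ⟨int2, eq2⟩ := face_integral v hv hd ψ hψ 2
  obtain ⟨int3, eq3⟩ := face_integral v hv hd ψ hψ 3
  have hm : ∀ ℓ, MeasurableSet (f ℓ) := fun ℓ =>
    ((Set.toFinite _).isCompact_convexHull (𝕜 := ℝ)).isClosed.measurableSet
  have hnull : ∀ ℓ ℓ', ℓ ≠ ℓ' → μH[2] (f ℓ ∩ f ℓ') = 0 := fun ℓ ℓ' hne =>
    face_pair_null v hd ℓ ℓ' hne
  have d0 : AEDisjoint μH[2] (f 0) (f 1 ∪ (f 2 ∪ f 3)) := by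
    have hsub : f 0 ∩ (f 1 ∪ (f 2 ∪ f 3)) ⊆
        (f 0 ∩ f 1) ∪ ((f 0 ∩ f 2) ∪ (f 0 ∩ f 3)) := by
      rw [inter_union_distrib_left, inter_union_distrib_left]
    exact measure_mono_null hsub (measure_union_null (hnull 0 1 (by decide))
      (measure_union_null (hnull 0 2 (by decide)) (hnull 0 3 (by decide))))
  have d1 : AEDisjoint μH[2] (f 1) (f 2 ∪ f 3) := by
    have hsub : f 1 ∩ (f 2 ∪ f 3) ⊆ (f 1 ∩ f 2) ∪ (f 1 ∩ f 3) := by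
      rw [inter_union_distrib_left]
    exact measure_mono_null hsub (measure_union_null (hnull 1 2 (by decide))
      (hnull 1 3 (by decide)))
  have d2 : AEDisjoint μH[2] (f 2) (f 3) := hnull 2 3 (by decide)
  rw [hfront]
  rw [integral_union_ae d0 (((hm 1).union ((hm 2).union (hm 3))).nullMeasurableSet)
    int0 (int1.union (int2.union int3))]
  rw [integral_union_ae d1 (((hm 2).union (hm 3)).nullMeasurableSet) int1 (int2.union int3)]
  rw [integral_union_ae d2 ((hm 3).nullMeasurableSet) int2 int3]
  rw [Fin.sum_univ_four, eq0, eq1, eq2, eq3]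
  ring

end TetraProof

/-- For a positively oriented tetrahedron `K = F_K(K̂)` with affinely independent
vertices and any `ψ` continuous on `∂K`,
`∫_{∂K} ψ dμH² = Σ_{ℓ=1}^{4} 2|e_ℓ^K| ∫_{K̂₂} ψ(φ_ℓ^K(s,t)) ds dt`. -/
theorem boundary_integral_tetrahedron (v : Fin 4 → EuclideanSpace ℝ (Fin 3))
    (hv : AffineIndependent ℝ v) (hdet : 0 < (Bmat v).det)
    (ψ : EuclideanSpace ℝ (Fin 3) → ℝ)
    (hψ : ContinuousOn ψ (frontier (FK v '' refTet))) :
    (∫ x in frontier (FK v '' refTet), ψ x ∂μH[2]) =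
      ∑ ℓ : Fin 4, 2 * (μH[2] (face v ℓ)).toReal *
        ∫ p in refTri, ψ (faceParam v ℓ p) := by
  exact TetraProof.main' v hv hdet ψ hψ

end
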